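/- For every connected stable ribbon graph Γ: (i) the integer |E(Γ)| + |C(Γ)| − β_Γ# is even; (ii) β_Γ# + 2|V(Γ)| ≤ |E(Γ)| + |C(Γ)| + 2, i.e. 1 − |V(Γ)| + (|E(Γ)| + |C(Γ)| − β_Γ#)/2 ≥ 0. Consequently the genus g(Γ) is a nonnegative integer, g(Γ) ≥ Σ_{v ∈ V(Γ)} g(v), and in particular g(v) ≤ g(Γ) for every vertex v of Γ. -/

import Mathlib

noncomputable section

/-- The set of orbits ("cycles", counting fixed points, i.e. `1`-cycles)
of a permutation `σ` of `α`: each orbit is recorded as the set of points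
in the same cycle of `σ` as some given point. -/
def permOrbits {α : Type*} (σ : Equiv.Perm α) : Set (Set α) :=
  Set.range fun a => {x | σ.SameCycle a x}

/-- The data of a stable ribbon graph (the stability and connectedness conditions
are stated separately as `RibbonGraph.IsStable` and `RibbonGraph.Connected`):
a finite set `H` of half-edges, a finite set `V` of vertices, an incidence map
`ρ : H → V`, an involution `κ` of `H` (whose fixed points are the legs and whose
`2`-element orbits are the edges), a permutation `c` of `H` preserving each fiber
of `ρ` (whose orbits inside `ρ⁻¹(v)` form the cyclic decomposition `C(v)` of the
vertex `v`), and genus and boundary functions `g, b : V → ℕ`. -/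
structure RibbonGraph where
  /-- the half-edges -/
  H : Type
  /-- the vertices -/
  V : Type
  fintH : Fintype H
  fintV : Fintype V
  /-- the incidence map -/
  ρ : H → V
  /-- the involution determining the legs and the edges -/
  κ : Equiv.Perm H
  κ_invol : ∀ h, κ (κ h) = h
  /-- the permutation determining the cyclic decomposition of each vertex -/
  c : Equiv.Perm H
  c_fiber : ∀ h, ρ (c h) = ρ h
  /-- the genus of each vertex -/
  g : V → ℕ
  /-- the boundary of each vertex -/
  b : V → ℕ

attribute [instance] RibbonGraph.fintH RibbonGraph.fintV

namespace RibbonGraph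

variable (Γ : RibbonGraph)

/-- The set `L(Γ)` of legs: the fixed points of the involution `κ`. -/
def legSet : Set Γ.H := {h | Γ.κ h = h}

/-- `|L(Γ)|`, the number of legs. -/
def numLegs : ℕ := Γ.legSet.ncard

/-- The set `E(Γ)` of edges: the `2`-element orbits of the involution `κ`. -/
def edgeSet : Set (Set Γ.H) := {S | ∃ h, Γ.κ h ≠ h ∧ S = {h, Γ.κ h}}

/-- `|E(Γ)|`, the number of edges. -/
def numEdges : ℕ := Γ.edgeSet.ncard

/-- `|v|`, the valency of a vertex: the number of incident half-edges. -/
def valency (v : Γ.V) : ℕ := {h | Γ.ρ h = v}.ncard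

/-- `|C(v)|`, the number of cycles in the cyclic decomposition of the vertex `v`:
the number of orbits of `c` contained in the fiber `ρ⁻¹(v)`. -/
def numCyclesAt (v : Γ.V) : ℕ := {S ∈ permOrbits Γ.c | ∃ h ∈ S, Γ.ρ h = v}.ncard

/-- `|C(Γ)|`, the total number of orbits of the permutation `c`. -/
def numCycles : ℕ := (permOrbits Γ.c).ncard

/-- `β_Γ#`, the number of orbits (cycles, counting fixed points) of the composite
permutation `c ∘ κ`. -/
def betaSharp : ℕ := (permOrbits (Γ.c * Γ.κ)).ncard

/-- The loop number `l(v) = 2 g(v) + b(v) + |C(v)| − 1` of a vertex. -/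
def vertexLoop (v : Γ.V) : ℚ := 2 * Γ.g v + Γ.b v + Γ.numCyclesAt v - 1

/-- Stability: `|C(v)| + b(v) > 0` and `2 l(v) + |v| ≥ 3` for every vertex. -/
def IsStable : Prop :=
  ∀ v : Γ.V, 0 < Γ.numCyclesAt v + Γ.b v ∧ 3 ≤ 2 * Γ.vertexLoop v + Γ.valency v

/-- The relation on vertices relating `ρ(h)` to `ρ(κ(h))` for each half-edge `h`. -/
def adjRel : Γ.V → Γ.V → Prop := fun v w => ∃ h, Γ.ρ h = v ∧ Γ.ρ (Γ.κ h) = w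

/-- Connectedness: the vertex set is nonempty and the equivalence relation generated
by `adjRel` relates any two vertices. -/
def Connected : Prop :=
  Nonempty Γ.V ∧ ∀ v w : Γ.V, Relation.EqvGen Γ.adjRel v w

/-- The first Betti number `b₁(Γ) = |E(Γ)| − |V(Γ)| + 1` of a connected graph. -/
def betti : ℚ := (Γ.numEdges : ℚ) - Fintype.card Γ.V + 1

/-- The genus `g(Γ) = 1 − |V(Γ)| + (|E(Γ)| + |C(Γ)| − β_Γ#)/2 + Σ_v g(v)` of a
connected stable ribbon graph. -/
def genus : ℚ :=
  1 - (Fintype.card Γ.V : ℚ) + ((Γ.numEdges : ℚ) + Γ.numCycles - Γ.betaSharp) / 2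
    + ∑ v, (Γ.g v : ℚ)

/-- The number of boundary components `B(Γ) = β_Γ# + Σ_v b(v)`. -/
def numBoundary : ℚ := (Γ.betaSharp : ℚ) + ∑ v, (Γ.b v : ℚ)

/-- The loop number `ℓ(Γ) = 2 g(Γ) + B(Γ) − 1`. -/
def loopNumber : ℚ := 2 * Γ.genus + Γ.numBoundary - 1

end RibbonGraph

namespace RGAux
open Relation

variable {α : Type*}

def pairRel (x y : α) : α → α → Prop := fun a b => (a = x ∧ b = y) ∨ (a = y ∧ b = x)

def pairsRel (l : List (α × α)) : α → α → Prop := fun a b => (a, b) ∈ l ∨ (b, a) ∈ l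

def cls (r : α → α → Prop) (a : α) : Set α := {x | EqvGen r a x}

def ncl (r : α → α → Prop) : ℕ := (Set.range (cls r)).ncard

theorem eqvGen_le {r s : α → α → Prop} (h : ∀ a b, r a b → EqvGen s a b) :
    ∀ {a b}, EqvGen r a b → EqvGen s a b := by
  intro a b hab
  induction hab with
  | rel a b h' => exact h a b h'
  | refl a => exact .refl a
  | symm a b _ ih => exact .symm _ _ ih
  | trans a b c _ _ ih1 ih2 => exact .trans _ _ _ ih1 ih2

theorem cls_eq_iff {r : α → α → Prop} {a b : α} : cls r a = cls r b ↔ EqvGen r a b := by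
  constructor
  · intro h
    have hb : b ∈ cls r b := .refl b
    rw [← h] at hb
    exact hb
  · intro h
    ext x
    exact ⟨fun hx => .trans _ _ _ (.symm _ _ h) hx, fun hx => .trans _ _ _ h hx⟩

theorem ncard_range_le {β γ : Type*} [Finite α] (f : α → β) (g : α → γ)
    (h : ∀ a b, f a = f b → g a = g b) : (Set.range g).ncard ≤ (Set.range f).ncard := by
  rcases isEmpty_or_nonempty α with he | hne
  · simp [Set.range_eq_empty]
  · haveI : Finite (Set.range f) := (Set.finite_range f).to_subtype
    haveI : Finite (Set.range g) := (Set.finite_range g).to_subtype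
    rw [← Nat.card_coe_set_eq, ← Nat.card_coe_set_eq]
    refine Nat.card_le_card_of_surjective
      (fun s : Set.range f => (⟨g s.2.choose, Set.mem_range_self _⟩ : Set.range g)) ?_
    rintro ⟨-, a, rfl⟩
    refine ⟨⟨f a, Set.mem_range_self a⟩, ?_⟩
    exact Subtype.ext (h _ _ (⟨f a, Set.mem_range_self a⟩ : Set.range f).2.choose_spec)

theorem ncard_range_add_one_le {β γ : Type*} [Finite α] (f : α → β) (g : α → γ)
    (h : ∀ a b, f a = f b → g a = g b) {x y : α} (hxy : f x ≠ f y) (hg : g x = g y) :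
    (Set.range g).ncard + 1 ≤ (Set.range f).ncard := by
  classical
  set A : Set β := Set.range f \ {f y} with hA
  haveI : Finite A := ((Set.finite_range f).subset Set.diff_subset).to_subtype
  haveI : Finite (Set.range g) := (Set.finite_range g).to_subtype
  have hsurj : (Set.range g).ncard ≤ A.ncard := by
    rw [← Nat.card_coe_set_eq, ← Nat.card_coe_set_eq]
    refine Nat.card_le_card_of_surjective
      (fun s : A => (⟨g s.2.1.choose, Set.mem_range_self _⟩ : Set.range g)) ?_
    rintro ⟨-, a, rfl⟩
    by_cases hfa : f a = f y
    · have hxmem : f x ∈ A := ⟨Set.mem_range_self x, by simpa using hxy⟩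
      refine ⟨⟨f x, hxmem⟩, Subtype.ext ?_⟩
      have := h _ _ (hxmem.1.choose_spec)
      simp only at this ⊢
      rw [this, hg, ← h _ _ hfa]
    · have hamem : f a ∈ A := ⟨Set.mem_range_self a, by simpa using hfa⟩
      refine ⟨⟨f a, hamem⟩, Subtype.ext ?_⟩
      exact h _ _ (hamem.1.choose_spec)
  have hmem : f y ∈ Set.range f := Set.mem_range_self y
  have hcard : A.ncard = (Set.range f).ncard - 1 :=
    Set.ncard_diff_singleton_of_mem hmem
  have hpos : 1 ≤ (Set.range f).ncard :=
    (Set.ncard_pos (Set.finite_range f)).mpr ⟨f y, hmem⟩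
  omega

theorem ncard_range_le_add_one {β γ : Type*} [Finite α] (f : α → β) (g : α → γ) {y : α}
    (h : ∀ a b, g a = g b → f a = f b ∨ f a = f y ∨ f b = f y) :
    (Set.range f).ncard ≤ (Set.range g).ncard + 1 := by
  classical
  set A : Set β := Set.range f \ {f y} with hA
  haveI : Finite A := ((Set.finite_range f).subset Set.diff_subset).to_subtype
  haveI : Finite (Set.range g) := (Set.finite_range g).to_subtype
  have h1 : (Set.range f).ncard ≤ A.ncard + 1 := by
    have : Set.range f ⊆ insert (f y) A := by
      intro s hs
      by_cases hsy : s = f y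
      · simp [hsy]
      · exact Set.mem_insert_of_mem _ ⟨hs, hsy⟩
    calc (Set.range f).ncard ≤ (insert (f y) A).ncard :=
          Set.ncard_le_ncard this (((Set.finite_range f).subset Set.diff_subset).insert _)
      _ ≤ A.ncard + 1 := Set.ncard_insert_le _ _
  have h2 : A.ncard ≤ (Set.range g).ncard := by
    rw [← Nat.card_coe_set_eq, ← Nat.card_coe_set_eq]
    refine Nat.card_le_card_of_injective
      (fun s : A => (⟨g s.2.1.choose, Set.mem_range_self _⟩ : Set.range g)) ?_
    rintro ⟨s, hs⟩ ⟨t, ht⟩ hst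
    have hgeq : g hs.1.choose = g ht.1.choose := congrArg Subtype.val hst
    rcases h _ _ hgeq with h' | h' | h'
    · have : s = t := by rw [← hs.1.choose_spec, ← ht.1.choose_spec, h']
      exact Subtype.ext this
    · exact absurd (hs.1.choose_spec ▸ h') (by simpa using hs.2)
    · exact absurd (ht.1.choose_spec ▸ h') (by simpa using ht.2)
  omega


section NclLemmas
variable [Finite α] {r s : α → α → Prop} {x y : α}
set_option linter.unusedSectionVars false
set_option linter.unusedVariables false

theorem ncl_congr (h : ∀ a b, r a b ↔ s a b) : ncl r = ncl s := by
  have : r = s := by funext a b; exact propext (h a b)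
  rw [this]

theorem ncl_le_of_le (h : ∀ a b, r a b → EqvGen s a b) : ncl s ≤ ncl r := by
  refine ncard_range_le (cls r) (cls s) fun a b hab => ?_
  exact cls_eq_iff.mpr (eqvGen_le h (cls_eq_iff.mp hab))

theorem ncl_eq_of_le_le (h1 : ∀ a b, r a b → EqvGen s a b)
    (h2 : ∀ a b, s a b → EqvGen r a b) : ncl r = ncl s :=
  le_antisymm (ncl_le_of_le h2) (ncl_le_of_le h1)

theorem eqvGen_sup_pair_cases {a b : α}
    (hab : EqvGen (fun a b => r a b ∨ pairRel x y a b) a b) :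
    EqvGen r a b ∨ (EqvGen r a x ∧ EqvGen r y b) ∨ (EqvGen r a y ∧ EqvGen r x b) := by
  induction hab with
  | rel a b h' =>
    rcases h' with h' | ⟨rfl, rfl⟩ | ⟨rfl, rfl⟩
    · exact Or.inl (.rel _ _ h')
    · exact Or.inr (Or.inl ⟨.refl _, .refl _⟩)
    · exact Or.inr (Or.inr ⟨.refl _, .refl _⟩)
  | refl a => exact Or.inl (.refl _)
  | symm a b _ ih =>
    rcases ih with h' | ⟨h1, h2⟩ | ⟨h1, h2⟩
    · exact Or.inl (.symm _ _ h')
    · exact Or.inr (Or.inr ⟨.symm _ _ h2, .symm _ _ h1⟩)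
    · exact Or.inr (Or.inl ⟨.symm _ _ h2, .symm _ _ h1⟩)
  | trans a b c _ _ ih1 ih2 =>
    rcases ih1 with h1 | ⟨h1, h1'⟩ | ⟨h1, h1'⟩ <;>
      rcases ih2 with h2 | ⟨h2, h2'⟩ | ⟨h2, h2'⟩
    · exact Or.inl (.trans _ _ _ h1 h2)
    · exact Or.inr (Or.inl ⟨.trans _ _ _ h1 h2, h2'⟩)
    · exact Or.inr (Or.inr ⟨.trans _ _ _ h1 h2, h2'⟩)
    · exact Or.inr (Or.inl ⟨h1, .trans _ _ _ h1' h2⟩)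
    · exact Or.inr (Or.inl ⟨h1, h2'⟩)
    · exact Or.inl (.trans _ _ _ h1 h2')
    · exact Or.inr (Or.inr ⟨h1, .trans _ _ _ h1' h2⟩)
    · exact Or.inl (.trans _ _ _ h1 h2')
    · exact Or.inr (Or.inr ⟨h1, h2'⟩)

theorem eqvGen_mono_sup_pair {a b : α} (h : EqvGen r a b) :
    EqvGen (fun a b => r a b ∨ pairRel x y a b) a b :=
  eqvGen_le (fun a b h' => .rel _ _ (Or.inl h')) h

theorem eqvGen_sup_pair_self :
    EqvGen (fun a b => r a b ∨ pairRel x y a b) x y :=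
  .rel _ _ (Or.inr (Or.inl ⟨rfl, rfl⟩))

theorem ncl_le_ncl_sup_pair_add_one :
    ncl r ≤ ncl (fun a b => r a b ∨ pairRel x y a b) + 1 := by
  refine ncard_range_le_add_one (cls r) (cls fun a b => r a b ∨ pairRel x y a b) (y := y)
    fun a b hab => ?_
  rcases eqvGen_sup_pair_cases (x := x) (y := y) (cls_eq_iff.mp hab) with h' | ⟨h1, h2⟩ | ⟨h1, h2⟩
  · exact Or.inl (cls_eq_iff.mpr h')
  · exact Or.inr (Or.inr (cls_eq_iff.mpr (.symm _ _ h2)))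
  · exact Or.inr (Or.inl (cls_eq_iff.mpr h1))

theorem ncl_sup_pair_add_one_le (h : ¬ EqvGen r x y) :
    ncl (fun a b => r a b ∨ pairRel x y a b) + 1 ≤ ncl r := by
  refine ncard_range_add_one_le (cls r) (cls fun a b => r a b ∨ pairRel x y a b)
    (fun a b hab => cls_eq_iff.mpr (eqvGen_mono_sup_pair (cls_eq_iff.mp hab)))
    (x := x) (y := y) (fun hc => h (cls_eq_iff.mp hc))
    (cls_eq_iff.mpr eqvGen_sup_pair_self)

theorem ncl_sup_pair_of_rel (h : EqvGen r x y) :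
    ncl (fun a b => r a b ∨ pairRel x y a b) = ncl r := by
  refine ncl_eq_of_le_le (fun a b hab => ?_) (fun a b hab => .rel _ _ (Or.inl hab))
  rcases hab with h' | ⟨rfl, rfl⟩ | ⟨rfl, rfl⟩
  · exact .rel _ _ h'
  · exact h
  · exact .symm _ _ h

theorem ncl_bot : ncl (fun _ _ : α => False) = Nat.card α := by
  have hcls : ∀ a : α, cls (fun _ _ => False) a = {a} := by
    intro a
    ext b
    constructor
    · intro hb
      induction hb with
      | rel a b h' => exact h'.elim
      | refl a => rfl
      | symm a b _ ih => simp_all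
      | trans a b c _ _ ih1 ih2 => simp_all
    · rintro rfl; exact .refl _
  have : cls (fun _ _ : α => False) = fun a => ({a} : Set α) := funext hcls
  rw [ncl, this]
  rw [← Set.image_univ, Set.ncard_image_of_injective _ (fun a b hab => by
    simpa using hab), Set.ncard_univ]

theorem ncl_le_card : ncl r ≤ Nat.card α := by
  have := ncard_range_le (fun a : α => a) (cls r) (fun a b hab => congrArg (cls r) hab)
  simpa [ncl, Set.ncard_univ] using this

theorem ncl_total (h : ∀ a b : α, EqvGen r a b) (hne : Nonempty α) : ncl r = 1 := by
  obtain ⟨a⟩ := hne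
  have : Set.range (cls r) = {Set.univ} := by
    ext s
    simp only [Set.mem_range, Set.mem_singleton_iff]
    constructor
    · rintro ⟨b, rfl⟩
      ext c
      simp [cls, h b c]
    · rintro rfl
      exact ⟨a, by ext c; simp [cls, h a c]⟩
  rw [ncl, this, Set.ncard_singleton]

end NclLemmas

theorem pairsRel_cons_iff {q : α × α} {lq : List (α × α)} {a b : α} :
    pairsRel (q :: lq) a b ↔ pairsRel lq a b ∨ pairRel q.1 q.2 a b := by
  simp only [pairsRel, pairRel, List.mem_cons, Prod.ext_iff]
  tauto

section PermLayer
open Equiv Equiv.Perm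
variable [Fintype α] [DecidableEq α]
set_option linter.unusedSectionVars false

def permRel (σ : Perm α) : α → α → Prop := fun a b => σ a = b

def N (σ : Perm α) : ℕ := ncl (permRel σ)

theorem eqvGen_pow (σ : Perm α) (a : α) : ∀ n : ℕ, EqvGen (permRel σ) a ((σ ^ n) a) := by
  intro n
  induction n with
  | zero => simpa using EqvGen.refl a
  | succ n ih =>
    have : (σ ^ (n + 1)) a = σ ((σ ^ n) a) := by rw [pow_succ', Perm.mul_apply]
    rw [this]
    exact .trans _ _ _ ih (.rel _ _ rfl)

theorem eqvGen_permRel_iff {σ : Perm α} {a b : α} :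
    EqvGen (permRel σ) a b ↔ σ.SameCycle a b := by
  constructor
  · intro h
    induction h with
    | rel a b h' => exact h' ▸ ⟨1, by simp⟩
    | refl a => exact Equiv.Perm.SameCycle.refl σ a
    | symm a b _ ih => exact ih.symm
    | trans a b c _ _ ih1 ih2 => exact ih1.trans ih2
  · rintro ⟨i, hi⟩
    rcases le_or_gt 0 i with hi0 | hi0
    · have : (σ ^ i.toNat) a = b := by
        rw [← hi, ← zpow_natCast, Int.toNat_of_nonneg hi0]
      exact this ▸ eqvGen_pow σ a i.toNat
    · have : (σ ^ (-i).toNat) b = a := by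
        rw [← hi, ← zpow_natCast, Int.toNat_of_nonneg (by omega), ← Perm.mul_apply,
          ← zpow_add, neg_add_cancel, zpow_zero, Perm.one_apply]
      exact .symm _ _ (this ▸ eqvGen_pow σ b (-i).toNat)

theorem core_pow (σ : Perm α) {x y : α} (hxy : x ≠ y) :
    ∀ k, 1 ≤ k → (∀ j, 1 ≤ j → j < k → (σ ^ j) y ≠ x ∧ (σ ^ j) y ≠ y) →
    ((σ * Equiv.swap x y) ^ k) x = (σ ^ k) y := by
  intro k
  induction k with
  | zero => omega
  | succ n ih =>
    intro _ hj
    by_cases hn : n = 0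
    · subst hn
      simp [pow_one, Perm.mul_apply, Equiv.swap_apply_left]
    · have hn1 : 1 ≤ n := by omega
      have ih' := ih hn1 (fun j hj1 hj2 => hj j hj1 (by omega))
      have hy := hj n hn1 (by omega)
      rw [pow_succ', Perm.mul_apply, ih', Perm.mul_apply,
        Equiv.swap_apply_of_ne_of_ne hy.1 hy.2, ← Perm.mul_apply, ← pow_succ']

theorem exists_pos_pow_eq {σ : Perm α} {x y : α} (h : σ.SameCycle x y) (hxy : x ≠ y) :
    ∃ j : ℕ, 1 ≤ j ∧ (σ ^ j) y = x := by
  obtain ⟨i, hi⟩ := h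
  have hd : (0 : ℤ) < orderOf σ := by
    exact_mod_cast orderOf_pos σ
  set i' : ℤ := (-i) % (orderOf σ : ℤ) with hi'
  have h0 : 0 ≤ i' := Int.emod_nonneg _ (by omega)
  have heq : (σ ^ i') y = x := by
    have : σ ^ i' = σ ^ (-i) := zpow_mod_orderOf σ (-i) ▸ rfl
    rw [this, ← hi, ← Perm.mul_apply, ← zpow_add, neg_add_cancel, zpow_zero, Perm.one_apply]
  refine ⟨i'.toNat, ?_, ?_⟩
  · rcases Nat.eq_zero_or_pos i'.toNat with h0' | h0'
    · exfalso
      have : i' = 0 := by omega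
      rw [this, zpow_zero, Perm.one_apply] at heq
      exact hxy heq.symm
    · exact h0'
  · rw [← zpow_natCast, Int.toNat_of_nonneg h0]
    exact heq

theorem pow_mul_fix {σ : Perm α} {z : α} {k : ℕ} (hfix : (σ ^ k) z = z) :
    ∀ q, (σ ^ (k * q)) z = z := by
  intro q
  induction q with
  | zero => simp
  | succ q ih =>
    have : k * (q + 1) = k * q + k := by ring
    rw [this, pow_add, Perm.mul_apply, hfix, ih]

theorem pow_reduce_mod {σ : Perm α} {z : α} {k : ℕ} (hfix : (σ ^ k) z = z) (j : ℕ) :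
    (σ ^ j) z = (σ ^ (j % k)) z := by
  conv_lhs => rw [← Nat.mod_add_div j k]
  rw [pow_add, Perm.mul_apply, pow_mul_fix hfix]

theorem sameCycle_mul_swap_of_not {σ : Perm α} {x y : α} (hxy : x ≠ y)
    (h : ¬ σ.SameCycle x y) : (σ * Equiv.swap x y).SameCycle x y := by
  classical
  have hex : ∃ k, 1 ≤ k ∧ (σ ^ k) y = y :=
    ⟨orderOf σ, orderOf_pos σ, by rw [pow_orderOf_eq_one]; rfl⟩
  set k := Nat.find hex with hkdef
  obtain ⟨hk1, hky⟩ := Nat.find_spec hex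
  have hmin : ∀ j, j < k → ¬(1 ≤ j ∧ (σ ^ j) y = y) := fun j hj => Nat.find_min hex hj
  have hcore : ((σ * Equiv.swap x y) ^ k) x = (σ ^ k) y := by
    refine core_pow σ hxy k hk1 fun j hj1 hj2 => ⟨?_, ?_⟩
    · intro hc
      exact h (SameCycle.symm ⟨(j : ℤ), by rw [zpow_natCast]; exact hc⟩)
    · intro hc
      exact hmin j hj2 ⟨hj1, hc⟩
  exact ⟨(k : ℤ), by rw [zpow_natCast, hcore, hky]⟩

theorem not_sameCycle_mul_swap {σ : Perm α} {x y : α} (hxy : x ≠ y)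
    (h : σ.SameCycle x y) : ¬ (σ * Equiv.swap x y).SameCycle x y := by
  classical
  intro hτ
  set τ := σ * Equiv.swap x y with hτdef
  have hex : ∃ k, 1 ≤ k ∧ ((σ ^ k) y = x ∨ (σ ^ k) y = y) := by
    obtain ⟨j, hj1, hj2⟩ := exists_pos_pow_eq h hxy
    exact ⟨j, hj1, Or.inl hj2⟩
  set k := Nat.find hex with hkdef
  obtain ⟨hk1, hky⟩ := Nat.find_spec hex
  have hmin : ∀ j, j < k → ¬(1 ≤ j ∧ ((σ ^ j) y = x ∨ (σ ^ j) y = y)) :=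
    fun j hj => Nat.find_min hex hj
  -- show (σ ^ k) y = x
  have hkx : (σ ^ k) y = x := by
    rcases hky with h' | h'
    · exact h'
    · exfalso
      obtain ⟨j, hj1, hj2⟩ := exists_pos_pow_eq h hxy
      have hred : (σ ^ (j % k)) y = x := by rw [← pow_reduce_mod h' j]; exact hj2
      rcases Nat.eq_zero_or_pos (j % k) with h0 | h0
      · rw [h0, pow_zero, Perm.one_apply] at hred
        exact hxy hred.symm
      · exact hmin _ (Nat.mod_lt _ (by omega)) ⟨h0, Or.inl hred⟩
  have hcore : ∀ s, 1 ≤ s → s ≤ k → (τ ^ s) x = (σ ^ s) y := by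
    intro s hs1 hs2
    refine core_pow σ hxy s hs1 fun j hj1 hj2 => ?_
    have := hmin j (by omega)
    push_neg at this
    exact this hj1
  have hfix : (τ ^ k) x = x := by rw [hcore k hk1 le_rfl, hkx]
  obtain ⟨j, hj1, hj2⟩ := exists_pos_pow_eq hτ.symm hxy.symm
  have hred : (τ ^ (j % k)) x = y := by rw [← pow_reduce_mod hfix j]; exact hj2
  rcases Nat.eq_zero_or_pos (j % k) with h0 | h0
  · rw [h0, pow_zero, Perm.one_apply] at hred
    exact hxy hred
  · have hlt : j % k < k := Nat.mod_lt _ (by omega)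
    have := hcore (j % k) h0 (by omega)
    rw [this] at hred
    exact hmin _ hlt ⟨h0, Or.inr hred⟩


theorem eqvGen_swap_step {σ : Perm α} {x y : α} (a : α) :
    EqvGen (fun a b => permRel σ a b ∨ pairRel x y a b) a (Equiv.swap x y a) := by
  by_cases hax : a = x
  · subst hax
    rw [Equiv.swap_apply_left]
    exact .rel _ _ (Or.inr (Or.inl ⟨rfl, rfl⟩))
  · by_cases hay : a = y
    · subst hay
      rw [Equiv.swap_apply_right]
      exact .rel _ _ (Or.inr (Or.inr ⟨rfl, rfl⟩))
    · rw [Equiv.swap_apply_of_ne_of_ne hax hay]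
      exact .refl a

theorem eqvGen_join_swap (σ : Perm α) (x y : α) :
    ∀ a b, permRel (σ * Equiv.swap x y) a b →
      EqvGen (fun a b => permRel σ a b ∨ pairRel x y a b) a b := by
  intro a b hab
  have : b = σ (Equiv.swap x y a) := by rw [← hab]; rfl
  subst this
  exact .trans _ _ _ (eqvGen_swap_step a) (.rel _ _ (Or.inl rfl))

theorem ncl_join_swap_eq (σ : Perm α) (x y : α) :
    ncl (fun a b => permRel σ a b ∨ pairRel x y a b)
      = ncl (fun a b => permRel (σ * Equiv.swap x y) a b ∨ pairRel x y a b) := by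
  have hστ : (σ * Equiv.swap x y) * Equiv.swap x y = σ := by
    rw [mul_assoc, Equiv.swap_mul_self, mul_one]
  refine ncl_eq_of_le_le (fun a b hab => ?_) (fun a b hab => ?_)
  · rcases hab with hab | hab
    · exact eqvGen_join_swap (σ * Equiv.swap x y) x y a b (show permRel _ a b by rw [hστ]; exact hab)
    · exact .rel _ _ (Or.inr hab)
  · rcases hab with hab | hab
    · exact eqvGen_join_swap σ x y a b hab
    · exact .rel _ _ (Or.inr hab)

theorem N_mul_swap_of_sameCycle {σ : Perm α} {x y : α} (h : σ.SameCycle x y) (hxy : x ≠ y) :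
    N (σ * Equiv.swap x y) = N σ + 1 := by
  have hJσ : ncl (fun a b => permRel σ a b ∨ pairRel x y a b) = N σ :=
    ncl_sup_pair_of_rel (eqvGen_permRel_iff.mpr h)
  have hnotτ : ¬ (σ * Equiv.swap x y).SameCycle x y := not_sameCycle_mul_swap hxy h
  have h1 : ncl (fun a b => permRel (σ * Equiv.swap x y) a b ∨ pairRel x y a b) + 1
      ≤ N (σ * Equiv.swap x y) :=
    ncl_sup_pair_add_one_le (fun hc => hnotτ (eqvGen_permRel_iff.mp hc))
  have h2 : N (σ * Equiv.swap x y)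
      ≤ ncl (fun a b => permRel (σ * Equiv.swap x y) a b ∨ pairRel x y a b) + 1 :=
    ncl_le_ncl_sup_pair_add_one
  rw [← ncl_join_swap_eq, hJσ] at h1 h2
  omega

theorem N_mul_swap_of_not_sameCycle {σ : Perm α} {x y : α} (h : ¬ σ.SameCycle x y) :
    N (σ * Equiv.swap x y) + 1 = N σ := by
  have hxy : x ≠ y := fun hc => h (hc ▸ Equiv.Perm.SameCycle.refl σ x)
  have hτ : (σ * Equiv.swap x y).SameCycle x y := sameCycle_mul_swap_of_not hxy h
  have hJτ : ncl (fun a b => permRel (σ * Equiv.swap x y) a b ∨ pairRel x y a b)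
      = N (σ * Equiv.swap x y) :=
    ncl_sup_pair_of_rel (eqvGen_permRel_iff.mpr hτ)
  have h1 : ncl (fun a b => permRel σ a b ∨ pairRel x y a b) + 1 ≤ N σ :=
    ncl_sup_pair_add_one_le (fun hc => h (eqvGen_permRel_iff.mp hc))
  have h2 : N σ ≤ ncl (fun a b => permRel σ a b ∨ pairRel x y a b) + 1 :=
    ncl_le_ncl_sup_pair_add_one
  rw [ncl_join_swap_eq σ x y, hJτ] at h1 h2
  omega

theorem N_mul_swap_le {σ : Perm α} {x y : α} (hxy : x ≠ y) :
    N (σ * Equiv.swap x y) ≤ N σ + 1 := by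
  by_cases h : σ.SameCycle x y
  · rw [N_mul_swap_of_sameCycle h hxy]
  · have := N_mul_swap_of_not_sameCycle h
    omega


def swapProd (l : List (α × α)) : Perm α := (l.map fun p => Equiv.swap p.1 p.2).prod

theorem pairsRel_head {p : α × α} {l : List (α × α)} (z : α) :
    EqvGen (pairsRel (p :: l)) z (Equiv.swap p.1 p.2 z) := by
  by_cases hz1 : z = p.1
  · subst hz1
    rw [Equiv.swap_apply_left]
    exact .rel _ _ (Or.inl (by simp))
  · by_cases hz2 : z = p.2
    · subst hz2
      rw [Equiv.swap_apply_right]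
      exact .rel _ _ (Or.inr (by simp))
    · rw [Equiv.swap_apply_of_ne_of_ne hz1 hz2]
      exact .refl z

theorem pairsRel_mono_cons {p : α × α} {l : List (α × α)} {a b : α}
    (h : EqvGen (pairsRel l) a b) : EqvGen (pairsRel (p :: l)) a b := by
  refine eqvGen_le (fun a b hab => .rel _ _ ?_) h
  rcases hab with hab | hab
  · exact Or.inl (List.mem_cons_of_mem _ hab)
  · exact Or.inr (List.mem_cons_of_mem _ hab)

theorem span_of_prod (l : List (α × α)) :
    ∀ a, EqvGen (pairsRel l) a (swapProd l a) := by
  induction l with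
  | nil => intro a; simp only [swapProd, List.map_nil, List.prod_nil, Perm.one_apply]; exact .refl a
  | cons p l ih =>
    intro a
    have hsp : swapProd (p :: l) a = Equiv.swap p.1 p.2 (swapProd l a) := by
      simp only [swapProd, List.map_cons, List.prod_cons, Perm.mul_apply]
    rw [hsp]
    exact .trans _ _ _ (pairsRel_mono_cons (ih a)) (pairsRel_head _)

theorem sameCycle_le_pairsRel {l : List (α × α)} {a b : α}
    (h : (swapProd l).SameCycle a b) : EqvGen (pairsRel l) a b := by
  refine eqvGen_le (fun a b hab => ?_) (eqvGen_permRel_iff.mpr h)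
  have : b = swapProd l a := hab.symm
  subst this
  exact span_of_prod l a

theorem N_one : N (1 : Perm α) = Fintype.card α := by
  have hcls : ∀ a : α, cls (permRel (1 : Perm α)) a = {a} := by
    intro a
    ext b
    simp only [cls, Set.mem_setOf_eq, Set.mem_singleton_iff]
    rw [show (EqvGen (permRel (1 : Perm α)) a b ↔ _) from eqvGen_permRel_iff,
      Equiv.Perm.sameCycle_one]
    exact eq_comm
  have : cls (permRel (1 : Perm α)) = fun a => ({a} : Set α) := funext hcls
  rw [N, ncl, this, ← Set.image_univ,
    Set.ncard_image_of_injective _ (fun a b hab => by simpa using hab), Set.ncard_univ,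
    Nat.card_eq_fintype_card]

theorem perm_apply_inv_self (σ : Perm α) (x : α) : σ (σ⁻¹ x) = x :=
  σ.apply_symm_apply x

theorem perm_sameCycle_inv_apply_left {σ : Perm α} {x y : α} :
    σ.SameCycle (σ⁻¹ x) y ↔ σ.SameCycle x y := by
  rw [← Equiv.Perm.sameCycle_apply_left, perm_apply_inv_self]

theorem perm_sameCycle_inv_apply_right {σ : Perm α} {x y : α} :
    σ.SameCycle x (σ⁻¹ y) ↔ σ.SameCycle x y := by
  rw [← Equiv.Perm.sameCycle_apply_right, perm_apply_inv_self]

theorem exists_factorization (σ : Perm α) :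
    ∃ l : List (α × α),
      (∀ p ∈ l, p.1 ≠ p.2 ∧ σ.SameCycle p.1 p.2) ∧
      swapProd l = σ ∧
      l.length + N σ = Fintype.card α := by
  suffices H : ∀ n (σ : Perm α), σ.support.card ≤ n → ∃ l : List (α × α),
      (∀ p ∈ l, p.1 ≠ p.2 ∧ σ.SameCycle p.1 p.2) ∧ swapProd l = σ ∧
      l.length + N σ = Fintype.card α from H σ.support.card σ le_rfl
  intro n
  induction n with
  | zero =>
    intro σ hσ
    have : σ = 1 := Equiv.Perm.support_eq_empty_iff.mp (Finset.card_eq_zero.mp (by omega))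
    subst this
    exact ⟨[], by simp, by simp [swapProd], by simp [N_one]⟩
  | succ n ih =>
    intro σ hσ
    by_cases h1 : σ = 1
    · subst h1
      exact ⟨[], by simp, by simp [swapProd], by simp [N_one]⟩
    · obtain ⟨x, hx⟩ : ∃ x, σ x ≠ x := by
        by_contra hc
        push_neg at hc
        exact h1 (Equiv.ext hc)
      set σ' := Equiv.swap x (σ x) * σ with hσ'def
      have hcard : σ'.support.card < σ.support.card := Equiv.Perm.card_support_swap_mul hx
      obtain ⟨l', hl', hprod', hlen'⟩ := ih σ' (by omega)
      -- σ' = σ * swap (σ⁻¹ x) x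
      have hconj : σ' = σ * Equiv.swap (σ⁻¹ x) x := by
        rw [hσ'def, Equiv.mul_swap_eq_swap_mul, perm_apply_inv_self]
      have hNσ' : N σ' = N σ + 1 := by
        rw [hconj]
        refine N_mul_swap_of_sameCycle ⟨1, by simp⟩ ?_
        intro hc
        exact hx (by conv_lhs => rw [← hc, perm_apply_inv_self])
      have hsub : ∀ a b, σ'.SameCycle a b → σ.SameCycle a b := by
        have hstep : ∀ a, σ.SameCycle a (σ' a) := by
          intro a
          by_cases hax : σ a = x
          · have : σ' a = σ x := by rw [hσ'def, Perm.mul_apply, hax, Equiv.swap_apply_left]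
            rw [this]
            exact ⟨2, by rw [show ((2:ℤ)) = (2:ℕ) by norm_num, zpow_natCast, pow_succ,
              pow_one, Perm.mul_apply, hax]⟩
          · by_cases hax2 : σ a = σ x
            · have hxa : a = x := σ.injective hax2
              have : σ' a = a := by
                rw [hσ'def, Perm.mul_apply, hax2, Equiv.swap_apply_right, hxa]
              rw [this]
            · have : σ' a = σ a := by
                rw [hσ'def, Perm.mul_apply, Equiv.swap_apply_of_ne_of_ne hax hax2]
              rw [this]
              exact ⟨1, by simp⟩
        intro a b hab
        refine eqvGen_permRel_iff.mp (eqvGen_le (fun a b hab' => ?_)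
          (eqvGen_permRel_iff.mpr hab))
        have : b = σ' a := hab'.symm
        subst this
        exact eqvGen_permRel_iff.mpr (hstep a)
      refine ⟨(x, σ x) :: l', ?_, ?_, ?_⟩
      · rintro p hp
        rcases List.mem_cons.mp hp with rfl | hp
        · exact ⟨Ne.symm hx, ⟨1, by simp⟩⟩
        · exact ⟨(hl' p hp).1, hsub _ _ (hl' p hp).2⟩
      · simp only [swapProd, List.map_cons, List.prod_cons]
        rw [show (l'.map fun p => Equiv.swap p.1 p.2).prod = σ' from hprod', hσ'def,
          ← mul_assoc, Equiv.swap_mul_self, one_mul]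
      · simp only [List.length_cons]
        omega


theorem lemmaL (l : List (α × α)) (hd : ∀ p ∈ l, p.1 ≠ p.2) :
    Fintype.card α + N (swapProd l) ≤ l.length + 2 * ncl (pairsRel l) := by
  induction l with
  | nil =>
    have h1 : swapProd ([] : List (α × α)) = 1 := by simp [swapProd]
    have h2 : ncl (pairsRel ([] : List (α × α))) = Fintype.card α := by
      rw [ncl_congr (s := fun _ _ : α => False) (by simp [pairsRel]), ncl_bot,
        Nat.card_eq_fintype_card]
    rw [h1, N_one, h2]
    omega
  | cons p l ih =>
    have ih' := ih (fun q hq => hd q (List.mem_cons_of_mem _ hq))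
    set π' := swapProd l with hπ'
    have hne : p.1 ≠ p.2 := hd p List.mem_cons_self
    have hsp : swapProd (p :: l) = Equiv.swap p.1 p.2 * π' := by
      simp [swapProd, List.map_cons, List.prod_cons, hπ']
    have hconj : swapProd (p :: l) = π' * Equiv.swap (π'⁻¹ p.1) (π'⁻¹ p.2) := by
      rw [hsp, Equiv.mul_swap_eq_swap_mul, perm_apply_inv_self,
        perm_apply_inv_self]
    have hne' : π'⁻¹ p.1 ≠ π'⁻¹ p.2 := fun hc => hne (π'⁻¹.injective hc)
    have hcongr : ncl (pairsRel (p :: l))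
        = ncl (fun a b => pairsRel l a b ∨ pairRel p.1 p.2 a b) :=
      ncl_congr (fun a b => pairsRel_cons_iff)
    by_cases hrel : EqvGen (pairsRel l) p.1 p.2
    · have h1 : ncl (fun a b => pairsRel l a b ∨ pairRel p.1 p.2 a b) = ncl (pairsRel l) :=
        ncl_sup_pair_of_rel hrel
      have h2 : N (swapProd (p :: l)) ≤ N π' + 1 := by
        rw [hconj]; exact N_mul_swap_le hne'
      simp only [List.length_cons]
      omega
    · have h1 : ncl (pairsRel l) ≤ ncl (fun a b => pairsRel l a b ∨ pairRel p.1 p.2 a b) + 1 :=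
        ncl_le_ncl_sup_pair_add_one
      have hnsc : ¬ π'.SameCycle p.1 p.2 := fun hc => hrel (sameCycle_le_pairsRel hc)
      have hnsc' : ¬ π'.SameCycle (π'⁻¹ p.1) (π'⁻¹ p.2) := by
        rw [perm_sameCycle_inv_apply_left, perm_sameCycle_inv_apply_right]
        exact hnsc
      have h2 : N (swapProd (p :: l)) + 1 = N π' := by
        rw [hconj]; exact N_mul_swap_of_not_sameCycle hnsc'
      simp only [List.length_cons]
      omega

theorem parity_N (l : List (α × α)) (hd : ∀ p ∈ l, p.1 ≠ p.2) :
    ∀ σ : Perm α, (N (σ * swapProd l) + l.length + N σ) % 2 = 0 := by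
  induction l with
  | nil =>
    intro σ
    have : swapProd ([] : List (α × α)) = 1 := by simp [swapProd]
    rw [this, mul_one]
    simp only [List.length_nil]
    omega
  | cons p l ih =>
    intro σ
    have hne : p.1 ≠ p.2 := hd p List.mem_cons_self
    have hmul : σ * swapProd (p :: l) = (σ * Equiv.swap p.1 p.2) * swapProd l := by
      simp [swapProd, List.map_cons, List.prod_cons, mul_assoc]
    have ih' := ih (fun q hq => hd q (List.mem_cons_of_mem _ hq)) (σ * Equiv.swap p.1 p.2)
    have hdi : N (σ * Equiv.swap p.1 p.2) = N σ + 1 ∨ N (σ * Equiv.swap p.1 p.2) + 1 = N σ := by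
      by_cases hsc : σ.SameCycle p.1 p.2
      · exact Or.inl (N_mul_swap_of_sameCycle hsc hne)
      · exact Or.inr (N_mul_swap_of_not_sameCycle hsc)
    rw [hmul]
    simp only [List.length_cons]
    omega


theorem sameCycle_invol {κ : Perm α} (hinv : ∀ h, κ (κ h) = h) {a b : α} :
    κ.SameCycle a b ↔ b = a ∨ b = κ a := by
  have hκκ : κ * κ = 1 := Equiv.ext fun h => hinv h
  constructor
  · rintro ⟨i, hi⟩
    rcases Int.even_or_odd i with ⟨j, rfl⟩ | ⟨j, rfl⟩
    · left
      have : κ ^ (j + j) = 1 := by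
        rw [zpow_add, ← (Commute.refl κ).mul_zpow, hκκ, one_zpow]
      rw [this, Perm.one_apply] at hi
      exact hi.symm
    · right
      have : κ ^ (2 * j + 1) = κ := by
        rw [zpow_add, zpow_one, zpow_mul, show ((2:ℤ)) = ((2:ℕ) : ℤ) by norm_num,
          zpow_natCast, pow_two, hκκ, one_zpow, one_mul]
      rw [this] at hi
      exact hi.symm
  · rintro (rfl | rfl)
    · exact ⟨0, by simp⟩
    · exact ⟨1, by simp⟩

theorem invol_count (κ : Perm α) (hinv : ∀ h, κ (κ h) = h) :
    Fintype.card α = N κ + {S : Set α | ∃ h, κ h ≠ h ∧ S = {h, κ h}}.ncard := by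
  classical
  set eset := {S : Set α | ∃ h, κ h ≠ h ∧ S = {h, κ h}} with heset
  set legs := {h : α | κ h = h} with hlegs
  have hcls : ∀ a, cls (permRel κ) a = {a, κ a} := by
    intro a
    ext x
    simp only [cls, Set.mem_setOf_eq, Set.mem_insert_iff, Set.mem_singleton_iff]
    rw [show (EqvGen (permRel κ) a x ↔ _) from eqvGen_permRel_iff, sameCycle_invol hinv]
  have hrange : Set.range (cls (permRel κ)) = ((fun h => ({h} : Set α)) '' legs) ∪ eset := by
    ext S
    constructor
    · rintro ⟨a, rfl⟩
      rw [hcls a]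
      by_cases ha : κ a = a
      · exact Or.inl ⟨a, ha, by rw [ha, Set.pair_eq_singleton]⟩
      · exact Or.inr ⟨a, ha, rfl⟩
    · rintro (⟨a, ha, rfl⟩ | ⟨a, ha, rfl⟩)
      · exact ⟨a, by rw [hcls a, ha, Set.pair_eq_singleton]⟩
      · exact ⟨a, hcls a⟩
  have hdisj : Disjoint ((fun h => ({h} : Set α)) '' legs) eset := by
    rw [Set.disjoint_left]
    rintro S ⟨a, _, rfl⟩ ⟨b, hb, heq⟩
    have heq' : ({a} : Set α) = {b, κ b} := heq
    have hbmem : b ∈ ({a} : Set α) := heq' ▸ (Set.mem_insert b _)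
    have hkbmem : κ b ∈ ({a} : Set α) := heq' ▸ (show κ b ∈ ({b, κ b} : Set α) by simp)
    simp only [Set.mem_singleton_iff] at hbmem hkbmem
    exact hb (hkbmem.trans hbmem.symm)
  have hN : N κ = legs.ncard + eset.ncard := by
    rw [N, ncl, hrange, Set.ncard_union_eq hdisj (Set.toFinite _) (Set.toFinite _),
      Set.ncard_image_of_injective _ Set.singleton_injective]
  set suppF : Finset α := Finset.univ.filter (fun h => κ h ≠ h) with hsuppF
  have hfibers : suppF.card
      = ∑ e ∈ (Set.toFinite eset).toFinset,
          (suppF.filter fun h => ({h, κ h} : Set α) = e).card := by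
    refine Finset.card_eq_sum_card_fiberwise fun h hh => ?_
    rw [Finset.mem_coe, Set.Finite.mem_toFinset]
    exact ⟨h, by simpa [hsuppF] using hh, rfl⟩
  have heach : ∀ e ∈ (Set.toFinite eset).toFinset,
      (suppF.filter fun h => ({h, κ h} : Set α) = e).card = 2 := by
    intro e he
    obtain ⟨a, hane, rfl⟩ := (Set.Finite.mem_toFinset _).mp he
    have hfe : suppF.filter (fun h => ({h, κ h} : Set α) = {a, κ a}) = {a, κ a} := by
      ext h
      simp only [hsuppF, Finset.mem_filter, Finset.mem_univ, true_and, Finset.mem_insert,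
        Finset.mem_singleton]
      constructor
      · rintro ⟨hne, heq⟩
        have : h ∈ ({a, κ a} : Set α) := heq ▸ (Set.mem_insert h _)
        simpa using this
      · rintro (rfl | rfl)
        · exact ⟨hane, rfl⟩
        · refine ⟨?_, ?_⟩
          · rw [hinv a]
            exact fun hc => hane hc.symm
          · rw [hinv a, Set.pair_comm]
      
    rw [hfe]
    exact Finset.card_pair fun hc => hane hc.symm
  have hsum : suppF.card = 2 * eset.ncard := by
    rw [hfibers, Finset.sum_congr rfl heach, Finset.sum_const, smul_eq_mul,
      Set.ncard_eq_toFinset_card eset (Set.toFinite _)]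
    ring
  have hcompl : legs.ncard + {h : α | κ h ≠ h}.ncard = Fintype.card α := by
    have : {h : α | κ h ≠ h} = legsᶜ := by ext h; simp [hlegs]
    rw [this, Set.ncard_add_ncard_compl legs (Set.toFinite _) (Set.toFinite _),
      Nat.card_eq_fintype_card]
  have hsupp_eq : {h : α | κ h ≠ h}.ncard = suppF.card := by
    have : {h : α | κ h ≠ h} = (suppF : Set α) := by ext h; simp [hsuppF]
    rw [this, Set.ncard_coe_finset]
  omega


section LemmaB
variable {β : Type*} [Finite β]

theorem compat_push (c κ : Perm α) (ρ : α → β) (hfib : ∀ a, ρ (c a) = ρ a)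
    (ls : List α) {a b : α}
    (h : EqvGen (fun a b => permRel c a b ∨ pairsRel (ls.map fun x => (x, κ x)) a b) a b) :
    EqvGen (pairsRel (ls.map fun x => (ρ x, ρ (κ x)))) (ρ a) (ρ b) := by
  induction h with
  | rel a b h' =>
    rcases h' with h' | h' | h'
    · have : ρ b = ρ a := by rw [← h']; exact hfib a
      rw [this]
      exact .refl _
    · obtain ⟨x, hx, heq⟩ := List.mem_map.mp h'
      have h1 : a = x := (congrArg Prod.fst heq).symm
      have h2 : b = κ x := (congrArg Prod.snd heq).symm
      subst h1; subst h2
      exact .rel _ _ (Or.inl (List.mem_map.mpr ⟨a, hx, rfl⟩))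
    · obtain ⟨x, hx, heq⟩ := List.mem_map.mp h'
      have h1 : b = x := (congrArg Prod.fst heq).symm
      have h2 : a = κ x := (congrArg Prod.snd heq).symm
      subst h1; subst h2
      exact .rel _ _ (Or.inr (List.mem_map.mpr ⟨b, hx, rfl⟩))
  | refl a => exact .refl _
  | symm a b _ ih => exact .symm _ _ ih
  | trans a b d _ _ ih1 ih2 => exact .trans _ _ _ ih1 ih2

theorem lemmaB (c κ : Perm α) (ρ : α → β) (hfib : ∀ a, ρ (c a) = ρ a) :
    ∀ ls : List α,
      ncl (fun a b => permRel c a b ∨ pairsRel (ls.map fun x => (x, κ x)) a b) + Nat.card β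
        ≤ N c + ncl (pairsRel (ls.map fun x => (ρ x, ρ (κ x)))) := by
  intro ls
  induction ls with
  | nil =>
    have h1 : ncl (fun a b => permRel c a b
        ∨ pairsRel (([] : List α).map fun x => (x, κ x)) a b) = N c :=
      ncl_congr (by simp [pairsRel])
    have h2 : ncl (α := β) (pairsRel (([] : List α).map fun x => (ρ x, ρ (κ x))))
        = Nat.card β := by
      rw [ncl_congr (s := fun _ _ : β => False) (by simp [pairsRel]), ncl_bot]
    omega
  | cons h0 ls ih =>
    set rH := fun a b => permRel c a b ∨ pairsRel (ls.map fun x => (x, κ x)) a b with hrH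
    set rV := pairsRel (ls.map fun x => (ρ x, ρ (κ x))) with hrV
    have hHcongr : ncl (fun a b => permRel c a b
        ∨ pairsRel ((h0 :: ls).map fun x => (x, κ x)) a b)
        = ncl (fun a b => rH a b ∨ pairRel h0 (κ h0) a b) := by
      refine ncl_congr fun a b => ?_
      simp only [List.map_cons, pairsRel_cons_iff, hrH]
      try tauto
    have hVcongr : ncl (pairsRel ((h0 :: ls).map fun x => (ρ x, ρ (κ x))))
        = ncl (fun a b => rV a b ∨ pairRel (ρ h0) (ρ (κ h0)) a b) := by
      refine ncl_congr fun a b => ?_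
      simp only [List.map_cons, pairsRel_cons_iff, hrV]
      try tauto
    by_cases hc : EqvGen rH h0 (κ h0)
    · have hH : ncl (fun a b => rH a b ∨ pairRel h0 (κ h0) a b) = ncl rH :=
        ncl_sup_pair_of_rel hc
      have hV : ncl (fun a b => rV a b ∨ pairRel (ρ h0) (ρ (κ h0)) a b) = ncl rV :=
        ncl_sup_pair_of_rel (compat_push c κ ρ hfib ls hc)
      omega
    · have hH1 : ncl (fun a b => rH a b ∨ pairRel h0 (κ h0) a b) + 1 ≤ ncl rH :=
        ncl_sup_pair_add_one_le hc
      have hV1 : ncl rV ≤ ncl (fun a b => rV a b ∨ pairRel (ρ h0) (ρ (κ h0)) a b) + 1 :=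
        ncl_le_ncl_sup_pair_add_one
      omega

end LemmaB

theorem N_eq_permOrbits (σ : Perm α) : (permOrbits σ).ncard = N σ := by
  have : (fun a => {x | σ.SameCycle a x}) = cls (permRel σ) := by
    funext a
    ext x
    simp only [cls, Set.mem_setOf_eq]
    exact eqvGen_permRel_iff.symm
  rw [permOrbits, this, N, ncl]

theorem N_inv (σ : Perm α) : N σ⁻¹ = N σ := by
  rw [← N_eq_permOrbits, ← N_eq_permOrbits]
  have : (fun a => {x | σ⁻¹.SameCycle a x}) = fun a => {x | σ.SameCycle a x} := by
    funext a
    ext x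
    simp [Equiv.Perm.sameCycle_inv]
  rw [permOrbits, permOrbits, this]

theorem pairsRel_mono {l1 l2 : List (α × α)} (hsub : ∀ p ∈ l1, p ∈ l2) {a b : α}
    (h : EqvGen (pairsRel l1) a b) : EqvGen (pairsRel l2) a b := by
  refine eqvGen_le (fun a b hab => .rel _ _ ?_) h
  rcases hab with hab | hab
  · exact Or.inl (hsub _ hab)
  · exact Or.inr (hsub _ hab)

theorem swapProd_append (l1 l2 : List (α × α)) :
    swapProd (l1 ++ l2) = swapProd l1 * swapProd l2 := by
  simp [swapProd, List.map_append, List.prod_append]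

end PermLayer
end RGAux


/-- **Integrality and nonnegativity of the genus of a connected stable ribbon graph.**
For every connected stable ribbon graph `Γ`:
(i) the integer `|E(Γ)| + |C(Γ)| − β_Γ#` is even;
(ii) `β_Γ# + 2 |V(Γ)| ≤ |E(Γ)| + |C(Γ)| + 2`, i.e.
`1 − |V(Γ)| + (|E(Γ)| + |C(Γ)| − β_Γ#)/2 ≥ 0`.
Consequently the genus `g(Γ)` is a nonnegative integer, `g(Γ) ≥ Σ_v g(v)`, and in
particular `g(v) ≤ g(Γ)` for every vertex `v` of `Γ`. -/
theorem RibbonGraph.genus_isNonnegInteger_and_le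
    (Γ : RibbonGraph) (hstable : Γ.IsStable) (hconn : Γ.Connected) :
    Even ((Γ.numEdges : ℤ) + (Γ.numCycles : ℤ) - (Γ.betaSharp : ℤ)) ∧
    (Γ.betaSharp : ℤ) + 2 * (Fintype.card Γ.V : ℤ) ≤ (Γ.numEdges : ℤ) + (Γ.numCycles : ℤ) + 2 ∧
    (∃ n : ℕ, Γ.genus = (n : ℚ)) ∧
    (∑ v, (Γ.g v : ℚ)) ≤ Γ.genus ∧
    ∀ v : Γ.V, (Γ.g v : ℚ) ≤ Γ.genus := by
  classical
  obtain ⟨hne, hconn2⟩ := hconn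
  letI : DecidableEq Γ.H := Classical.decEq _
  open Relation in
  -- abbreviations
  have hκinv := Γ.κ_invol
  have hNC : Γ.numCycles = RGAux.N Γ.c := RGAux.N_eq_permOrbits Γ.c
  have hNB : Γ.betaSharp = RGAux.N (Γ.c * Γ.κ) := RGAux.N_eq_permOrbits (Γ.c * Γ.κ)
  have hE : Fintype.card Γ.H = RGAux.N Γ.κ + Γ.numEdges := RGAux.invol_count Γ.κ hκinv
  obtain ⟨lc, hlc, hlcprod, hlclen⟩ := RGAux.exists_factorization Γ.c
  obtain ⟨lκ, hlκ, hlκprod, hlκlen⟩ := RGAux.exists_factorization Γ.κ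
  obtain ⟨lq, hlq, hlqprod, hlqlen⟩ := RGAux.exists_factorization (Γ.c * Γ.κ)⁻¹
  set big := lc ++ lκ ++ lq with hbig
  have hbigprod : RGAux.swapProd big = 1 := by
    rw [hbig, RGAux.swapProd_append, RGAux.swapProd_append, hlcprod, hlκprod, hlqprod]
    group
  have hbigdist : ∀ p ∈ big, p.1 ≠ p.2 := by
    intro p hp
    rcases List.mem_append.mp hp with hp' | hp'
    · rcases List.mem_append.mp hp' with hp'' | hp''
      · exact (hlc p hp'').1
      · exact (hlκ p hp'').1
    · exact (hlq p hp').1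
  have hL := RGAux.lemmaL big hbigdist
  rw [hbigprod, RGAux.N_one] at hL
  have hbiglen : big.length = lc.length + lκ.length + lq.length := by
    simp only [hbig, List.length_append]
  have hNq : RGAux.N (Γ.c * Γ.κ)⁻¹ = RGAux.N (Γ.c * Γ.κ) := RGAux.N_inv _
  set uls := (Finset.univ : Finset Γ.H).toList with huls
  have hmemuls : ∀ x : Γ.H, x ∈ uls := fun x => by simp [huls]
  set rH := fun a b => RGAux.permRel Γ.c a b
      ∨ RGAux.pairsRel (uls.map fun x => (x, Γ.κ x)) a b with hrH
  have hκstep : ∀ u : Γ.H, Relation.EqvGen rH u (Γ.κ u) := fun u =>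
    .rel _ _ (Or.inr (Or.inl (List.mem_map.mpr ⟨u, hmemuls u, rfl⟩)))
  have hteq : RGAux.ncl (RGAux.pairsRel big) = RGAux.ncl rH := by
    refine RGAux.ncl_eq_of_le_le ?_ ?_
    · intro a b hab
      have hsc_c : ∀ u v : Γ.H, Γ.c.SameCycle u v → Relation.EqvGen rH u v := fun u v h =>
        RGAux.eqvGen_le (fun u v huv => .rel _ _ (Or.inl huv)) (RGAux.eqvGen_permRel_iff.mpr h)
      have hsc_κ : ∀ u v : Γ.H, Γ.κ.SameCycle u v → Relation.EqvGen rH u v := by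
        intro u v h
        rcases (RGAux.sameCycle_invol hκinv).mp h with rfl | rfl
        · exact .refl _
        · exact hκstep _
      have hsc_cκ : ∀ u v : Γ.H, (Γ.c * Γ.κ).SameCycle u v → Relation.EqvGen rH u v := by
        intro u v h
        refine RGAux.eqvGen_le ?_ (RGAux.eqvGen_permRel_iff.mpr h)
        intro u' v' huv
        have hveq : v' = Γ.c (Γ.κ u') := by rw [← huv]; rfl
        subst hveq
        exact .trans _ _ _ (hκstep u') (.rel _ _ (Or.inl rfl))
      have key : ∀ p ∈ big, Relation.EqvGen rH p.1 p.2 := by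
        intro p hp
        rcases List.mem_append.mp hp with hp' | hp'
        · rcases List.mem_append.mp hp' with hp'' | hp''
          · exact hsc_c _ _ (hlc p hp'').2
          · exact hsc_κ _ _ (hlκ p hp'').2
        · exact hsc_cκ _ _ (Equiv.Perm.sameCycle_inv.mp (hlq p hp').2)
      rcases hab with hab | hab
      · exact key (a, b) hab
      · exact .symm _ _ (key (b, a) hab)
    · intro a b hab
      have hsubc : ∀ p ∈ lc, p ∈ big := fun p hp => by
        rw [hbig]; exact List.mem_append.mpr (Or.inl (List.mem_append.mpr (Or.inl hp)))
      have hsubκ : ∀ p ∈ lκ, p ∈ big := fun p hp => by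
        rw [hbig]; exact List.mem_append.mpr (Or.inl (List.mem_append.mpr (Or.inr hp)))
      have hspanκ : ∀ u : Γ.H, Relation.EqvGen (RGAux.pairsRel big) u (Γ.κ u) := by
        intro u
        have := RGAux.span_of_prod lκ u
        rw [hlκprod] at this
        exact RGAux.pairsRel_mono hsubκ this
      rcases hab with hab | hab
      · have := RGAux.span_of_prod lc a
        rw [hlcprod] at this
        have hba : b = Γ.c a := hab.symm
        subst hba
        exact RGAux.pairsRel_mono hsubc this
      · rcases hab with hab | hab
        · obtain ⟨x, hx, heq⟩ := List.mem_map.mp hab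
          have h1 : a = x := (congrArg Prod.fst heq).symm
          have h2 : b = Γ.κ x := (congrArg Prod.snd heq).symm
          subst h1; subst h2
          exact hspanκ a
        · obtain ⟨x, hx, heq⟩ := List.mem_map.mp hab
          have h1 : b = x := (congrArg Prod.fst heq).symm
          have h2 : a = Γ.κ x := (congrArg Prod.snd heq).symm
          subst h1; subst h2
          exact .symm _ _ (hspanκ b)
  have hB := RGAux.lemmaB Γ.c Γ.κ Γ.ρ Γ.c_fiber uls
  have hV1 : RGAux.ncl (RGAux.pairsRel (uls.map fun x => (Γ.ρ x, Γ.ρ (Γ.κ x)))) = 1 := by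
    refine RGAux.ncl_total (fun v w => ?_) hne
    refine RGAux.eqvGen_le (fun v w hvw => ?_) (hconn2 v w)
    obtain ⟨h0, h1, h2⟩ := hvw
    subst h1; subst h2
    exact .rel _ _ (Or.inl (List.mem_map.mpr ⟨h0, hmemuls h0, rfl⟩))
  rw [hV1, Nat.card_eq_fintype_card, ← hrH] at hB
  have hpar := RGAux.parity_N lκ (fun p hp => (hlκ p hp).1) Γ.c
  rw [hlκprod] at hpar
  -- main natural-number inequalities
  have hV2 : Γ.betaSharp + 2 * Fintype.card Γ.V ≤ Γ.numEdges + Γ.numCycles + 2 := by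
    rw [hteq] at hL
    omega
  have hVpos : 1 ≤ Fintype.card Γ.V := Fintype.card_pos_iff.mpr hne
  have hparity : (Γ.numEdges + Γ.numCycles + Γ.betaSharp) % 2 = 0 := by
    omega
  refine ⟨?_, ?_, ?_, ?_, ?_⟩
  · rw [Int.even_iff]
    omega
  · omega
  · -- genus is a nonnegative integer
    set d := (Γ.numEdges + Γ.numCycles - Γ.betaSharp) / 2 with hd
    have hd2 : 2 * d + Γ.betaSharp = Γ.numEdges + Γ.numCycles := by omega
    have hVle : Fintype.card Γ.V ≤ d + 1 := by omega
    have hhalfQ : ((Γ.numEdges : ℚ) + Γ.numCycles - Γ.betaSharp) / 2 = d := by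
      have : ((2 * d + Γ.betaSharp : ℕ) : ℚ) = ((Γ.numEdges + Γ.numCycles : ℕ) : ℚ) := by
        rw [hd2]
      push_cast at this
      linarith
    have hgen : Γ.genus = (d : ℚ) + 1 - Fintype.card Γ.V + ∑ v, (Γ.g v : ℚ) := by
      rw [RibbonGraph.genus, hhalfQ]; ring
    refine ⟨(d + 1 - Fintype.card Γ.V) + ∑ v, Γ.g v, ?_⟩
    rw [hgen]
    push_cast [Nat.cast_sub hVle]
    ring
  · set d := (Γ.numEdges + Γ.numCycles - Γ.betaSharp) / 2 with hd
    have hd2 : 2 * d + Γ.betaSharp = Γ.numEdges + Γ.numCycles := by omega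
    have hVle : Fintype.card Γ.V ≤ d + 1 := by omega
    have hhalfQ : ((Γ.numEdges : ℚ) + Γ.numCycles - Γ.betaSharp) / 2 = d := by
      have : ((2 * d + Γ.betaSharp : ℕ) : ℚ) = ((Γ.numEdges + Γ.numCycles : ℕ) : ℚ) := by
        rw [hd2]
      push_cast at this
      linarith
    have hgen : Γ.genus = (d : ℚ) + 1 - Fintype.card Γ.V + ∑ v, (Γ.g v : ℚ) := by
      rw [RibbonGraph.genus, hhalfQ]; ring
    rw [hgen]
    have : (Fintype.card Γ.V : ℚ) ≤ (d : ℚ) + 1 := by exact_mod_cast hVle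
    linarith
  · intro v
    have h1 : (Γ.g v : ℚ) ≤ ∑ w, (Γ.g w : ℚ) :=
      Finset.single_le_sum (f := fun w => (Γ.g w : ℚ)) (fun i _ => by positivity)
        (Finset.mem_univ v)
    set d := (Γ.numEdges + Γ.numCycles - Γ.betaSharp) / 2 with hd
    have hd2 : 2 * d + Γ.betaSharp = Γ.numEdges + Γ.numCycles := by omega
    have hVle : Fintype.card Γ.V ≤ d + 1 := by omega
    have hhalfQ : ((Γ.numEdges : ℚ) + Γ.numCycles - Γ.betaSharp) / 2 = d := by
      have : ((2 * d + Γ.betaSharp : ℕ) : ℚ) = ((Γ.numEdges + Γ.numCycles : ℕ) : ℚ) := by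
        rw [hd2]
      push_cast at this
      linarith
    have hgen : Γ.genus = (d : ℚ) + 1 - Fintype.card Γ.V + ∑ w, (Γ.g w : ℚ) := by
      rw [RibbonGraph.genus, hhalfQ]; ring
    rw [hgen]
    have : (Fintype.card Γ.V : ℚ) ≤ (d : ℚ) + 1 := by exact_mod_cast hVle
    linarith
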